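/- There exists a binary, reflexive, transitive, total relation ⪯ on ℝ[X,Y] satisfying axioms (O1), (O2), (O3) and (Q3), which is neither an order on ℝ[X,Y] nor induced by any valuation v via f ⪯ g ⇔ v(g) ≤ v(f). Concretely, the relation determined on monomials by 0 ≺ 1 ≺ X ≺ X² ≺ ⋯ ≺ Y ∼ XY ∼ X²Y ∼ ⋯ ∼ Y² ∼ ⋯ and rf ∼ f for nonzero real r, extended to polynomials by comparing their ⪯-largest monomials, has these properties. -/

import Mathlib

open MvPolynomial

abbrev P2 := MvPolynomial (Fin 2) ℝ

/-- The quasi-order-like relation on `ℝ[X,Y]` determined on monomials by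
`0 ≺ 1 ≺ X ≺ X² ≺ ⋯ ≺ Y ∼ XY ∼ X²Y ∼ ⋯ ∼ Y² ∼ ⋯` and `r·f ∼ f` for nonzero real `r`,
and on polynomials by comparing their largest monomials: `f ⪯ g` iff `f = 0`, or
`g ≠ 0` and either `g` involves `Y`, or neither involves `Y` and
`deg_X f ≤ deg_X g`. -/
def mqle (f g : MvPolynomial (Fin 2) ℝ) : Prop :=
  f = 0 ∨ (g ≠ 0 ∧
    (0 < degreeOf 1 g ∨
      (degreeOf 1 f = 0 ∧ degreeOf 1 g = 0 ∧ degreeOf 0 f ≤ degreeOf 0 g)))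

lemma degOf_neg (i : Fin 2) (f : P2) : degreeOf i (-f) = degreeOf i f := by
  simp [degreeOf_eq_sup, support_neg]

lemma degOf0_mul {f g : P2} (hf : f ≠ 0) (hg : g ≠ 0) :
    degreeOf 0 (f * g) = degreeOf 0 f + degreeOf 0 g := by
  have hf' : finSuccEquiv ℝ 1 f ≠ 0 := by
    simpa using (map_ne_zero_iff _ (finSuccEquiv ℝ 1).injective).2 hf
  have hg' : finSuccEquiv ℝ 1 g ≠ 0 := by
    simpa using (map_ne_zero_iff _ (finSuccEquiv ℝ 1).injective).2 hg
  rw [← natDegree_finSuccEquiv, ← natDegree_finSuccEquiv, ← natDegree_finSuccEquiv,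
    map_mul, Polynomial.natDegree_mul hf' hg']

lemma degOf_mul (i : Fin 2) {f g : P2} (hf : f ≠ 0) (hg : g ≠ 0) :
    degreeOf i (f * g) = degreeOf i f + degreeOf i g := by
  fin_cases i
  · exact degOf0_mul hf hg
  · have e : Fin 2 ≃ Fin 2 := Equiv.swap 0 1
    have key : ∀ p : P2, degreeOf 1 p = degreeOf 0 (rename (Equiv.swap (0:Fin 2) 1) p) := by
      intro p
      have := degreeOf_rename_of_injective (p := p)
        (f := (Equiv.swap (0:Fin 2) 1)) (Equiv.swap (0:Fin 2) 1).injective 1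
      simpa using this.symm
    have hrf : rename (Equiv.swap (0:Fin 2) 1) f ≠ 0 := by
      simpa using (map_ne_zero_iff _ (renameEquiv ℝ (Equiv.swap (0:Fin 2) 1)).injective).2 hf
    have hrg : rename (Equiv.swap (0:Fin 2) 1) g ≠ 0 := by
      simpa using (map_ne_zero_iff _ (renameEquiv ℝ (Equiv.swap (0:Fin 2) 1)).injective).2 hg
    show degreeOf 1 (f * g) = degreeOf 1 f + degreeOf 1 g
    rw [key, key, key, map_mul, degOf0_mul hrf hrg]

noncomputable def cl (p : P2) : WithBot (WithTop ℕ) :=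
  if p = 0 then ⊥ else if 0 < degreeOf 1 p then ((⊤ : WithTop ℕ) : WithBot (WithTop ℕ))
    else (((degreeOf 0 p : ℕ) : WithTop ℕ) : WithBot (WithTop ℕ))


lemma cl_ne_bot {p : P2} (hp : p ≠ 0) : cl p ≠ ⊥ := by
  unfold cl
  rw [if_neg hp]
  split <;> simp

lemma mqle_iff {f g : P2} : mqle f g ↔ cl f ≤ cl g := by
  unfold mqle cl
  by_cases hf : f = 0
  · simp [hf]
  by_cases hg : g = 0
  · simp only [hf, hg, ne_eq, not_true_eq_false, false_and, or_false, false_iff,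
      if_false, if_true, eq_self_iff_true]
    split <;> simp
  rw [if_neg hf, if_neg hg]
  by_cases h1g : 0 < degreeOf 1 g
  · simp only [hf, hg, h1g, ne_eq, not_false_eq_true, true_and, true_or, false_or, iff_true,
      if_pos]
    split <;> simp
  · have h1g' : degreeOf 1 g = 0 := by omega
    rw [if_neg h1g]
    by_cases h1f : 0 < degreeOf 1 f
    · have : degreeOf 1 f ≠ 0 := by omega
      simp [hf, hg, h1g, h1f, this]
    · have h1f' : degreeOf 1 f = 0 := by omega
      simp [hf, hg, h1g, h1g', h1f', WithBot.coe_le_coe, WithTop.coe_le_coe]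

lemma cl_neg (f : P2) : cl (-f) = cl f := by
  unfold cl
  simp only [neg_eq_zero, degOf_neg]

lemma cl_top_of_pos {f : P2} (h : 0 < degreeOf 1 f) :
    cl f = ((⊤ : WithTop ℕ) : WithBot (WithTop ℕ)) := by
  have hf : f ≠ 0 := by rintro rfl; simp at h
  unfold cl; rw [if_neg hf, if_pos h]

lemma cl_add_le (f g : P2) : cl (f + g) ≤ max (cl f) (cl g) := by
  by_cases hfg : f + g = 0
  · simp [cl, hfg]
  by_cases hf : f = 0
  · simp [hf]
  by_cases hg : g = 0
  · simp [hg]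
  by_cases h1 : 0 < degreeOf 1 (f + g)
  · have : 0 < max (degreeOf 1 f) (degreeOf 1 g) :=
      lt_of_lt_of_le h1 (degreeOf_add_le 1 f g)
    rcases Nat.lt_or_ge 0 (degreeOf 1 f) with hp | hp
    · rw [cl_top_of_pos h1, cl_top_of_pos hp]
      exact le_max_of_le_left le_rfl
    · have hp' : 0 < degreeOf 1 g := by omega
      rw [cl_top_of_pos h1, cl_top_of_pos hp']
      exact le_max_of_le_right le_rfl
  · rcases Nat.lt_or_ge 0 (degreeOf 1 f) with hp | hp
    · rw [cl_top_of_pos hp]; exact le_max_of_le_left le_top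
    rcases Nat.lt_or_ge 0 (degreeOf 1 g) with hq | hq
    · rw [cl_top_of_pos hq]; exact le_max_of_le_right le_top
    have h1f : degreeOf 1 f = 0 := by omega
    have h1g : degreeOf 1 g = 0 := by omega
    have hd : degreeOf 0 (f + g) ≤ max (degreeOf 0 f) (degreeOf 0 g) := degreeOf_add_le 0 f g
    unfold cl
    rw [if_neg hfg, if_neg h1, if_neg hf, if_neg hg, if_neg (by omega), if_neg (by omega)]
    rcases le_max_iff.1 hd with h | h
    · exact le_max_of_le_left (by exact_mod_cast h)
    · exact le_max_of_le_right (by exact_mod_cast h)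

lemma cl_add_eq_max {f g : P2} (h : cl f ≠ cl g) : cl (f + g) = max (cl f) (cl g) := by
  have key : ∀ a b : P2, cl b < cl a → cl (a + b) = max (cl a) (cl b) := by
    intro a b hba
    rw [max_eq_left hba.le]
    refine le_antisymm ((cl_add_le a b).trans (by rw [max_eq_left hba.le])) ?_
    have h2 : cl a = cl ((a + b) + (-b)) := by ring_nf
    have h3 : cl a ≤ max (cl (a + b)) (cl b) := by
      rw [h2]
      exact (cl_add_le _ _).trans (by rw [cl_neg])
    rcases le_max_iff.1 h3 with h4 | h4
    · exact h4
    · exact absurd h4 (not_le.2 hba)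
  rcases lt_or_gt_of_ne h with hlt | hlt
  · rw [add_comm, max_comm]; exact key g f hlt
  · exact key f g hlt

lemma cl_mul (f g : P2) : cl (f * g) = cl f + cl g := by
  by_cases hf : f = 0
  · simp [hf, cl]
  by_cases hg : g = 0
  · simp [hg, cl]
  have hfg : f * g ≠ 0 := mul_ne_zero hf hg
  have h1 : degreeOf 1 (f * g) = degreeOf 1 f + degreeOf 1 g := degOf_mul 1 hf hg
  have h0 : degreeOf 0 (f * g) = degreeOf 0 f + degreeOf 0 g := degOf_mul 0 hf hg
  unfold cl
  rw [if_neg hf, if_neg hg, if_neg hfg, h1, h0]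
  rcases Nat.lt_or_ge 0 (degreeOf 1 f) with hp | hp
  · rw [if_pos hp, if_pos (by omega)]
    split
    · rw [← WithBot.coe_add]; simp
    · rw [← WithBot.coe_add]; simp
  rcases Nat.lt_or_ge 0 (degreeOf 1 g) with hq | hq
  · rw [if_pos hq, if_pos (by omega), if_neg (by omega), ← WithBot.coe_add]
    simp
  · rw [if_neg (by omega), if_neg (by omega), if_neg (by omega)]
    push_cast
    rfl

lemma not_mqle_X0_one : ¬ mqle (X 0) 1 := by
  rintro (h | ⟨-, h | ⟨h1, -, h2⟩⟩)
  · exact X_ne_zero 0 h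
  · rw [show (1 : P2) = C 1 from (map_one C).symm, degreeOf_C] at h
    exact Nat.lt_irrefl 0 h
  · rw [degreeOf_X, show (1 : P2) = C 1 from (map_one C).symm, degreeOf_C] at h2
    simp at h2

lemma mqle_one_X0 : mqle 1 (X 0) := by
  refine Or.inr ⟨X_ne_zero 0, Or.inr ⟨?_, ?_, ?_⟩⟩
  · rw [show (1 : P2) = C 1 from (map_one C).symm, degreeOf_C]
  · rw [degreeOf_X]; simp
  · rw [show (1 : P2) = C 1 from (map_one C).symm, degreeOf_C]; simp

/-- There is a reflexive, transitive, total relation on `ℝ[X,Y]` satisfying (O1), (O2),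
(O3) and (Q3) which is neither an order (it fails unrestricted additivity (O4)) nor
induced by any valuation. -/
theorem counterexample_relation_on_polynomialRing :
    -- reflexive, transitive, total
    (∀ f : MvPolynomial (Fin 2) ℝ, mqle f f) ∧
    (∀ f g h : MvPolynomial (Fin 2) ℝ, mqle f g → mqle g h → mqle f h) ∧
    (∀ f g : MvPolynomial (Fin 2) ℝ, mqle f g ∨ mqle g f) ∧
    -- (O1)
    (mqle 0 1 ∧ ¬ mqle 1 0) ∧
    -- (O2)
    (∀ f g : MvPolynomial (Fin 2) ℝ, mqle (f * g) 0 → mqle f 0 ∨ mqle g 0) ∧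
    -- (O3)
    (∀ f g h : MvPolynomial (Fin 2) ℝ, mqle f g → mqle 0 h → mqle (f * h) (g * h)) ∧
    -- (Q3)
    (∀ f g h : MvPolynomial (Fin 2) ℝ,
      mqle f g → ¬ (mqle h g ∧ mqle g h) → mqle (f + h) (g + h)) ∧
    -- not an order: unrestricted additivity (O4) fails
    (¬ ∀ f g h : MvPolynomial (Fin 2) ℝ, mqle f g → mqle (f + h) (g + h)) ∧
    -- not induced by any valuation
    (∀ (Γ : Type) [AddCommGroup Γ] [LinearOrder Γ] [IsOrderedAddMonoid Γ]
        (v : MvPolynomial (Fin 2) ℝ → WithTop Γ),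
      v 0 = ⊤ → v 1 = 0 →
      (∀ f g : MvPolynomial (Fin 2) ℝ, v (f * g) = v f + v g) →
      (∀ f g : MvPolynomial (Fin 2) ℝ, min (v f) (v g) ≤ v (f + g)) →
      ¬ ∀ f g : MvPolynomial (Fin 2) ℝ, mqle f g ↔ v g ≤ v f) := by
  refine ⟨fun f => mqle_iff.2 le_rfl,
    fun f g h hfg hgh => mqle_iff.2 ((mqle_iff.1 hfg).trans (mqle_iff.1 hgh)),
    fun f g => (le_total (cl f) (cl g)).imp mqle_iff.2 mqle_iff.2,
    ⟨Or.inl rfl, ?_⟩, ?_, ?_, ?_, ?_, ?_⟩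
  · rintro (h | ⟨h, -⟩)
    · exact one_ne_zero h
    · exact h rfl
  · rintro f g (h | ⟨h, -⟩)
    · exact (mul_eq_zero.1 h).imp Or.inl Or.inl
    · exact absurd rfl h
  · intro f g h hfg _
    refine mqle_iff.2 ?_
    rw [cl_mul, cl_mul]
    exact add_le_add (mqle_iff.1 hfg) le_rfl
  · intro f g h hfg hne
    have hgh : cl g ≠ cl h := fun e => hne ⟨mqle_iff.2 e.ge, mqle_iff.2 e.le⟩
    refine mqle_iff.2 ?_
    calc cl (f + h) ≤ max (cl f) (cl h) := cl_add_le _ _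
      _ ≤ max (cl g) (cl h) := max_le_max (mqle_iff.1 hfg) le_rfl
      _ = cl (g + h) := (cl_add_eq_max hgh).symm
  · intro H
    have h := H 1 (X 0) (-(X 0)) mqle_one_X0
    rw [add_neg_cancel] at h
    rcases h with h | ⟨h, -⟩
    · have h1 : (1 : P2) = X 0 := by linear_combination h
      have := congrArg (degreeOf 0) h1
      rw [degreeOf_X, show (1 : P2) = C 1 from (map_one C).symm, degreeOf_C] at this
      simp at this
    · exact h rfl
  · intro Γ _ _ _ v hv0 hv1 hvmul _ hiff
    have hX1ne : v (X 1) ≠ ⊤ := by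
      intro htop
      have h : mqle (X 1) 0 := (hiff (X 1) 0).2 (by rw [hv0, htop])
      rcases h with h | ⟨h, -⟩
      · exact X_ne_zero 1 h
      · exact h rfl
    have hd : degreeOf 1 (X 0 * X 1 : P2) = 1 := by
      rw [degOf_mul 1 (X_ne_zero 0) (X_ne_zero 1), degreeOf_X, degreeOf_X]
      simp
    have hd1 : degreeOf 1 (X 1 : P2) = 1 := by rw [degreeOf_X]; simp
    have hne : (X 0 * X 1 : P2) ≠ 0 := mul_ne_zero (X_ne_zero 0) (X_ne_zero 1)
    have h1 : v (X 0 * X 1) ≤ v (X 1) :=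
      (hiff (X 1) (X 0 * X 1)).1 (Or.inr ⟨hne, Or.inl (by omega)⟩)
    have h2 : v (X 1) ≤ v (X 0 * X 1) :=
      (hiff (X 0 * X 1) (X 1)).1 (Or.inr ⟨X_ne_zero 1, Or.inl (by omega)⟩)
    have heq : v (X 0) + v (X 1) = 0 + v (X 1) := by
      rw [← hvmul, zero_add]; exact le_antisymm h1 h2
    have hX0 : v (X 0) = 0 := WithTop.add_right_cancel hX1ne heq
    exact not_mqle_X0_one ((hiff (X 0) 1).2 (by rw [hv1, hX0]))
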